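/- Let m ≥ 1, let 2 ≤ s ≤ m, let δ > 0 and J ≥ 1. Assume that for every j with 1 ≤ j ≤ J one has Σ_{i=1}^{s−1} λ_i γ_i² ≤ 4 C_s^{2j} δ · Σ_{i=s}^m λ_i γ_i². Then for every j with 1 ≤ j ≤ J, E_j ≤ 4 (1 + δ) C_s^{2j} · Σ_{i=1}^m λ_i γ_i². (Paper's Theorem 2: if the first s−1 eigencomponents of the initial CG error are small relative to the remaining components, CG convergence in the first J iterations is governed by the constant C_s rather than by C_1.) -/

import Mathlib

open Polynomial Polynomial.Chebyshev

lemma Tdeg : ∀ n : ℕ, (T ℝ (n : ℤ)).natDegree ≤ n := by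
  intro n
  induction n using Nat.strong_induction_on with
  | _ n ih =>
    match n with
    | 0 => simp [T_zero]
    | 1 => simp [T_one]
    | (k + 2) =>
      have h1 := ih (k + 1) (by omega)
      have h0 := ih k (by omega)
      have : ((k : ℤ) + 2) = ((k : ℕ) : ℤ) + 2 := by push_cast; ring
      rw [show (((k+2 : ℕ)) : ℤ) = ((k : ℤ) + 2) by push_cast; ring, T_add_two]
      refine le_trans (natDegree_sub_le _ _) ?_
      have : (2 * X * T ℝ ((k:ℤ) + 1)).natDegree ≤ k + 2 := by
        refine le_trans (natDegree_mul_le) ?_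
        have : (2 * X : ℝ[X]).natDegree ≤ 1 := le_trans natDegree_mul_le (by simp)
        have h1' : (T ℝ ((k:ℤ)+1)).natDegree ≤ k + 1 := by
          rw [show ((k:ℤ)+1) = (((k+1:ℕ)):ℤ) by push_cast; ring]; exact h1
        omega
      have h0' : (T ℝ (k:ℤ)).natDegree ≤ k + 2 := le_trans h0 (by omega)
      omega

lemma Tval : ∀ (n : ℕ) (x : ℝ), 1 ≤ x →
    (T ℝ (n : ℤ)).eval x =
      ((x + Real.sqrt (x^2 - 1))^n + (x - Real.sqrt (x^2 - 1))^n) / 2 := by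
  intro n
  induction n using Nat.strong_induction_on with
  | _ n ih =>
    intro x hx
    have hs : Real.sqrt (x^2-1) ^ 2 = x^2 - 1 := Real.sq_sqrt (by nlinarith)
    match n with
    | 0 => simp [T_zero]
    | 1 => simp [T_one]
    | (k + 2) =>
      have h1 := ih (k + 1) (by omega) x hx
      have h0 := ih k (by omega) x hx
      rw [show (((k+2 : ℕ)) : ℤ) = ((k : ℤ) + 2) by push_cast; ring, T_add_two]
      rw [show ((k:ℤ)+1) = (((k+1:ℕ)):ℤ) by push_cast; ring] at *
      simp only [eval_sub, eval_mul, eval_ofNat, eval_X, h1, h0]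
      set a := x + Real.sqrt (x^2-1)
      set b := x - Real.sqrt (x^2-1)
      have hab : a * b = 1 := by simp only [a, b]; nlinarith
      have : a^(k+2) + b^(k+2) = (a+b) * (a^(k+1) + b^(k+1)) - (a*b) * (a^k + b^k) := by ring
      rw [hab] at this
      have habs : a + b = 2 * x := by simp [a, b]; ring
      rw [habs] at this
      linarith [this]

lemma Tcosbound (n : ℕ) (u : ℝ) (hu : |u| ≤ 1) : |(T ℝ (n : ℤ)).eval u| ≤ 1 := by
  have : u = Real.cos (Real.arccos u) := (Real.cos_arccos (by linarith [abs_le.1 hu |>.1]) (by linarith [abs_le.1 hu |>.2])).symm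
  rw [this, T_real_cos]
  exact Real.abs_cos_le_one _

lemma Tineq (n : ℕ) {u t : ℝ} (hu : 1 ≤ u) (hut : u ≤ t) :
    1 ≤ (T ℝ (n : ℤ)).eval u ∧ (T ℝ (n : ℤ)).eval u ≤ (T ℝ (n : ℤ)).eval t ∧
      (t + Real.sqrt (t^2 - 1))^n ≤ 2 * (T ℝ (n : ℤ)).eval t := by
  have ht : (1 : ℝ) ≤ t := le_trans hu hut
  have hsu : Real.sqrt (u^2-1) ^ 2 = u^2 - 1 := Real.sq_sqrt (by nlinarith)
  have hst : Real.sqrt (t^2-1) ^ 2 = t^2 - 1 := Real.sq_sqrt (by nlinarith)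
  set zu := u + Real.sqrt (u^2-1) with hzu
  set zt := t + Real.sqrt (t^2-1) with hzt
  have hzu1 : 1 ≤ zu := by
    have := Real.sqrt_nonneg (u^2-1); simp only [hzu]; linarith
  have hzt1 : 1 ≤ zt := by
    have := Real.sqrt_nonneg (t^2-1); simp only [hzt]; linarith
  have hzuzt : zu ≤ zt := by
    have : Real.sqrt (u^2-1) ≤ Real.sqrt (t^2-1) := Real.sqrt_le_sqrt (by nlinarith)
    simp only [hzu, hzt]; linarith
  have hiu : u - Real.sqrt (u^2-1) = zu⁻¹ := by
    refine eq_inv_of_mul_eq_one_right ?_; nlinarith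
  have hit : t - Real.sqrt (t^2-1) = zt⁻¹ := by
    refine eq_inv_of_mul_eq_one_right ?_; nlinarith
  have hevu : (T ℝ (n : ℤ)).eval u = (zu^n + (zu⁻¹)^n) / 2 := by
    rw [Tval n u hu, hiu]
  have hevt : (T ℝ (n : ℤ)).eval t = (zt^n + (zt⁻¹)^n) / 2 := by
    rw [Tval n t ht, hit]
  have ha : 1 ≤ zu ^ n := by
    calc (1:ℝ) = 1 ^ n := (one_pow n).symm
    _ ≤ zu ^ n := pow_le_pow_left₀ zero_le_one hzu1 n
  have hab : zu ^ n ≤ zt ^ n := pow_le_pow_left₀ (by linarith) hzuzt n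
  have hb : 1 ≤ zt ^ n := le_trans ha hab
  set a := zu ^ n with hadef
  set b := zt ^ n with hbdef
  have hane : a ≠ 0 := by positivity
  have hbne : b ≠ 0 := by positivity
  have hainv : a⁻¹ ≤ 1 := inv_le_one_of_one_le₀ ha
  have hbinv0 : 0 ≤ b⁻¹ := by positivity
  have haa : a * a⁻¹ = 1 := mul_inv_cancel₀ hane
  have hbb : b * b⁻¹ = 1 := mul_inv_cancel₀ hbne
  have hmon : a + a⁻¹ ≤ b + b⁻¹ := by
    have h : b + b⁻¹ - (a + a⁻¹) = (b - a) * (a * b - 1) / (a * b) := by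
      field_simp; ring
    have h2 : 0 ≤ (b - a) * (a * b - 1) / (a * b) := by
      apply div_nonneg (mul_nonneg (by linarith) (by nlinarith)) (by positivity)
    linarith
  have hone : 1 ≤ (T ℝ (n : ℤ)).eval u := by
    rw [hevu, inv_pow, ← hadef]
    nlinarith [mul_nonneg (sub_nonneg.2 ha) (sub_nonneg.2 hainv)]
  refine ⟨hone, ?_, ?_⟩
  · rw [hevu, hevt, inv_pow, inv_pow, ← hadef, ← hbdef]; linarith
  · rw [hevt, inv_pow, ← hbdef]; linarith

set_option maxHeartbeats 2000000 in
/-- Paper's Theorem 2: if the first `s - 1` eigencomponents of the initial CG error are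
small relative to the remaining components, CG convergence in the first `J` iterations is
governed by the constant `C_s` rather than by `C_1`. Here
`E j = sInf { Σ_{i=1}^m λ_i (γ_i q(λ_i))² : q polynomial, deg q ≤ j, q(0) = 1 }` and
`C_s = (√κ_s − 1)/(√κ_s + 1)` with `κ_s = λ_m / λ_s`. -/
theorem cg_small_first_components (m : ℕ) (hm : 1 ≤ m) (s : ℕ) (hs : 2 ≤ s) (hsm : s ≤ m)
    (lam gam : ℕ → ℝ)
    (hpos : ∀ i, 1 ≤ i → i ≤ m → 0 < lam i)
    (hmono : ∀ i k, 1 ≤ i → i ≤ k → k ≤ m → lam i ≤ lam k)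
    (δ : ℝ) (hδ : 0 < δ) (J : ℕ) (hJ : 1 ≤ J)
    (hsmall : ∀ j, 1 ≤ j → j ≤ J →
      ∑ i ∈ Finset.Icc 1 (s - 1), lam i * gam i ^ 2 ≤
        4 * ((Real.sqrt (lam m / lam s) - 1) / (Real.sqrt (lam m / lam s) + 1)) ^ (2 * j) * δ *
          ∑ i ∈ Finset.Icc s m, lam i * gam i ^ 2) :
    ∀ j, 1 ≤ j → j ≤ J →
      sInf {y : ℝ | ∃ q : Polynomial ℝ, q.natDegree ≤ j ∧ q.eval 0 = 1 ∧
          y = ∑ i ∈ Finset.Icc 1 m, lam i * (gam i * q.eval (lam i)) ^ 2} ≤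
        4 * (1 + δ) *
          ((Real.sqrt (lam m / lam s) - 1) / (Real.sqrt (lam m / lam s) + 1)) ^ (2 * j) *
          ∑ i ∈ Finset.Icc 1 m, lam i * gam i ^ 2 := by
  intro j hj1 hjJ
  set r := Real.sqrt (lam m / lam s) with hr
  set Cc := (r - 1) / (r + 1) with hCc
  have hls : 0 < lam s := hpos s (by omega) hsm
  have hlm : 0 < lam m := hpos m hm le_rfl
  have hsmle : lam s ≤ lam m := hmono s m (by omega) hsm le_rfl
  -- set is bounded below by 0
  have hbdd : BddBelow {y : ℝ | ∃ q : Polynomial ℝ, q.natDegree ≤ j ∧ q.eval 0 = 1 ∧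
      y = ∑ i ∈ Finset.Icc 1 m, lam i * (gam i * q.eval (lam i)) ^ 2} := by
    refine ⟨0, fun y hy => ?_⟩
    obtain ⟨q, _, _, rfl⟩ := hy
    apply Finset.sum_nonneg
    intro i hi
    simp only [Finset.mem_Icc] at hi
    exact mul_nonneg (hpos i hi.1 hi.2).le (sq_nonneg _)
  -- helper: sInf ≤ any value attained
  have key : ∀ q : Polynomial ℝ, q.natDegree ≤ j → q.eval 0 = 1 →
      sInf {y : ℝ | ∃ q : Polynomial ℝ, q.natDegree ≤ j ∧ q.eval 0 = 1 ∧
          y = ∑ i ∈ Finset.Icc 1 m, lam i * (gam i * q.eval (lam i)) ^ 2} ≤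
        ∑ i ∈ Finset.Icc 1 m, lam i * (gam i * q.eval (lam i)) ^ 2 :=
    fun q hdq h0q => csInf_le hbdd ⟨q, hdq, h0q, rfl⟩
  have hsum_split : ∀ f : ℕ → ℝ,
      (∑ i ∈ Finset.Icc 1 (s-1), f i) + ∑ i ∈ Finset.Icc s m, f i
        = ∑ i ∈ Finset.Icc 1 m, f i := by
    intro f
    have h1 : Finset.Icc 1 (s-1) = Finset.Ioc 0 (s-1) := Finset.Icc_add_one_left_eq_Ioc 0 (s-1)
    have h2 : Finset.Icc s m = Finset.Ioc (s-1) m := by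
      rw [← Finset.Icc_add_one_left_eq_Ioc]; congr 1; omega
    have h3 : Finset.Icc 1 m = Finset.Ioc 0 m := Finset.Icc_add_one_left_eq_Ioc 0 m
    rw [h1, h2, h3]
    exact Finset.sum_Ioc_consecutive f (by omega) (by omega)
  rcases eq_or_lt_of_le hsmle with heq | hlt
  · -- degenerate case lam s = lam m : Cc = 0
    have hr1 : r = 1 := by rw [hr, ← heq, div_self hls.ne', Real.sqrt_one]
    have hC0 : Cc = 0 := by rw [hCc, hr1]; norm_num
    have hCpow : Cc ^ (2 * j) = 0 := by
      rw [hC0]; exact zero_pow (by omega)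
    -- all first components vanish
    have hzero : ∀ i ∈ Finset.Icc 1 (s-1), lam i * gam i ^ 2 = 0 := by
      have h := hsmall j hj1 hjJ
      rw [hCpow] at h
      simp only [mul_zero, zero_mul, mul_comm] at h
      intro i hi
      have hnn : ∀ i ∈ Finset.Icc 1 (s-1), 0 ≤ lam i * gam i ^ 2 := by
        intro i hi; simp only [Finset.mem_Icc] at hi
        exact mul_nonneg (hpos i hi.1 (by omega)).le (sq_nonneg _)
      have : ∑ i ∈ Finset.Icc 1 (s-1), lam i * gam i ^ 2 = 0 :=
        le_antisymm (by linarith) (Finset.sum_nonneg hnn)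
      exact (Finset.sum_eq_zero_iff_of_nonneg hnn).1 this i hi
    set q : Polynomial ℝ := 1 - Polynomial.C (lam m)⁻¹ * Polynomial.X with hq
    have hdq : q.natDegree ≤ j := by
      refine le_trans (Polynomial.natDegree_sub_le _ _) ?_
      have : (Polynomial.C (lam m)⁻¹ * Polynomial.X : Polynomial ℝ).natDegree ≤ 1 := by
        refine le_trans (Polynomial.natDegree_mul_le) ?_
        simp
      simp only [Polynomial.natDegree_one]
      omega
    have h0q : q.eval 0 = 1 := by simp [hq]
    have hval : ∑ i ∈ Finset.Icc 1 m, lam i * (gam i * q.eval (lam i)) ^ 2 = 0 := by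
      apply Finset.sum_eq_zero
      intro i hi
      simp only [Finset.mem_Icc] at hi
      rcases lt_or_ge i s with his | his
      · have := hzero i (Finset.mem_Icc.2 ⟨hi.1, by omega⟩)
        have : lam i * gam i ^ 2 = 0 := this
        have h2 : lam i * (gam i * q.eval (lam i)) ^ 2
            = (lam i * gam i ^ 2) * q.eval (lam i) ^ 2 := by ring
        rw [h2, this, zero_mul]
      · have hle : lam i ≤ lam m := hmono i m hi.1 hi.2 le_rfl
        have hge : lam s ≤ lam i := hmono s i (by omega) his hi.2
        have : lam i = lam m := le_antisymm hle (heq ▸ hge)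
        have heval : q.eval (lam i) = 0 := by
          simp [hq, this, inv_mul_cancel₀ hlm.ne']
        rw [heval]
        ring
    calc sInf _ ≤ ∑ i ∈ Finset.Icc 1 m, lam i * (gam i * q.eval (lam i)) ^ 2 :=
          key q hdq h0q
      _ = 0 := hval
      _ ≤ _ := by
          rw [hCpow]
          simp
  · -- main case: lam s < lam m
    have hκ : 1 < lam m / lam s := (one_lt_div hls).2 hlt
    have hr0 : 0 ≤ r := Real.sqrt_nonneg _
    have hr2 : r ^ 2 = lam m / lam s := Real.sq_sqrt (by positivity)
    have hr1 : 1 < r := by nlinarith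
    have hlmr : lam m = r ^ 2 * lam s := by rw [hr2]; field_simp
    set d := lam m - lam s with hd
    have hd0 : 0 < d := by rw [hd]; linarith
    set t := (lam m + lam s) / d with ht
    have ht1 : 1 < t := by
      rw [ht, lt_div_iff₀ hd0, hd]; linarith
    have hst : Real.sqrt (t ^ 2 - 1) = 2 * r * lam s / d := by
      have h1 : t ^ 2 - 1 = (2 * r * lam s / d) ^ 2 := by
        rw [ht]; field_simp; nlinarith [hlmr]
      rw [h1, Real.sqrt_sq (by positivity)]
    have hzC : Cc * (t + Real.sqrt (t ^ 2 - 1)) = 1 := by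
      rw [hCc, hst, ht]
      have hdval : d = (r - 1) * (r + 1) * lam s := by rw [hd, hlmr]; ring
      rw [hdval, hlmr]
      have h1 : r + 1 ≠ 0 := by positivity
      have h2 : r - 1 ≠ 0 := by linarith
      field_simp
      ring
    set z := t + Real.sqrt (t ^ 2 - 1) with hz
    have hCc0 : 0 < Cc := div_pos (by linarith) (by linarith)
    obtain ⟨hTt1, -, hTtlow⟩ := Tineq j (le_of_lt ht1) (le_refl t)
    set Tt := (T ℝ (j : ℤ)).eval t with hTt
    have hTt0 : 0 < Tt := by linarith
    have hCcj0 : 0 < Cc ^ j := pow_pos hCc0 j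
    have hpowCc : Cc ^ (2 * j) = (Cc ^ j) ^ 2 := by
      rw [← pow_mul, mul_comm]
    have hone : Cc ^ j * z ^ j = 1 := by rw [← mul_pow, hzC, one_pow]
    have hTtinv : Tt⁻¹ ≤ 2 * Cc ^ j := by
      have h1 : 1 ≤ 2 * Cc ^ j * Tt := by
        nlinarith [mul_le_mul_of_nonneg_left hTtlow hCcj0.le]
      rw [inv_eq_one_div, div_le_iff₀ hTt0]
      linarith
    obtain ⟨q, hq⟩ : ∃ q : Polynomial ℝ, q = Polynomial.C Tt⁻¹ *
        ((T ℝ (j : ℤ)).comp (Polynomial.C t - Polynomial.C (2 / d) * Polynomial.X)) :=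
      ⟨_, rfl⟩
    have heval : ∀ x : ℝ, q.eval x = Tt⁻¹ * (T ℝ (j : ℤ)).eval (t - 2 / d * x) := by
      intro x; simp [hq, Polynomial.eval_comp]
    have h0q : q.eval 0 = 1 := by
      rw [heval 0]
      norm_num
      exact inv_mul_cancel₀ hTt0.ne'
    have hdq : q.natDegree ≤ j := by
      rw [hq]
      refine le_trans (Polynomial.natDegree_mul_le) ?_
      simp only [Polynomial.natDegree_C, zero_add]
      refine le_trans (Polynomial.natDegree_comp_le) ?_
      have hlin : (Polynomial.C t - Polynomial.C (2 / d) * Polynomial.X : Polynomial ℝ).natDegree ≤ 1 := by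
        refine le_trans (Polynomial.natDegree_sub_le _ _) ?_
        have : (Polynomial.C (2 / d) * Polynomial.X : Polynomial ℝ).natDegree ≤ 1 :=
          le_trans (Polynomial.natDegree_mul_le) (by simp)
        simp only [Polynomial.natDegree_C]
        omega
      have := Tdeg j
      calc (T ℝ (j : ℤ)).natDegree *
            (Polynomial.C t - Polynomial.C (2 / d) * Polynomial.X : Polynomial ℝ).natDegree
          ≤ j * 1 := Nat.mul_le_mul (Tdeg j) hlin
        _ = j := mul_one j
    -- bound on the tail range
    have hq2 : ∀ i, s ≤ i → i ≤ m → (q.eval (lam i)) ^ 2 ≤ 4 * Cc ^ (2 * j) := by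
      intro i hsi him
      have hli1 : lam s ≤ lam i := hmono s i (by omega) hsi him
      have hli2 : lam i ≤ lam m := hmono i m (by omega) him le_rfl
      obtain ⟨u, hu⟩ : ∃ u : ℝ, u = t - 2 / d * lam i := ⟨_, rfl⟩
      have hud : u * d = lam m + lam s - 2 * lam i := by
        rw [hu, ht]; field_simp
      have hub : |u| ≤ 1 := by
        rw [abs_le]
        constructor
        · nlinarith [hud, hd0, hli2]
        · nlinarith [hud, hd0, hli1]
      have hb := Tcosbound j u hub
      have hTu2 : ((T ℝ (j : ℤ)).eval u) ^ 2 ≤ 1 := by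
        rw [← sq_abs]; nlinarith [abs_nonneg ((T ℝ (j : ℤ)).eval u)]
      rw [heval (lam i), ← hu]
      calc (Tt⁻¹ * (T ℝ (j : ℤ)).eval u) ^ 2
          = Tt⁻¹ ^ 2 * ((T ℝ (j : ℤ)).eval u) ^ 2 := by ring
        _ ≤ Tt⁻¹ ^ 2 * 1 := by nlinarith [sq_nonneg Tt⁻¹]
        _ = Tt⁻¹ ^ 2 := mul_one _
        _ ≤ (2 * Cc ^ j) ^ 2 := pow_le_pow_left₀ (by positivity) hTtinv 2
        _ = 4 * Cc ^ (2 * j) := by rw [hpowCc]; ring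
    -- bound on the head range
    have hq1 : ∀ i, 1 ≤ i → i ≤ s - 1 → (q.eval (lam i)) ^ 2 ≤ 1 := by
      intro i hi1 his
      have hli0 : 0 < lam i := hpos i hi1 (by omega)
      have hlis : lam i ≤ lam s := hmono i s hi1 (by omega) hsm
      obtain ⟨u, hu⟩ : ∃ u : ℝ, u = t - 2 / d * lam i := ⟨_, rfl⟩
      have hud : u * d = lam m + lam s - 2 * lam i := by
        rw [hu, ht]; field_simp
      have hu1 : 1 ≤ u := by nlinarith [hud, hd0, hlis]
      have hut : u ≤ t := by
        rw [hu]
        have : 0 ≤ 2 / d * lam i := by positivity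
        linarith
      obtain ⟨hTu1, hTuTt, -⟩ := Tineq j hu1 hut
      rw [heval (lam i), ← hu]
      have h1 : Tt⁻¹ * (T ℝ (j : ℤ)).eval u ≤ 1 := by
        rw [← inv_mul_cancel₀ hTt0.ne']
        exact mul_le_mul_of_nonneg_left (hTt ▸ hTuTt) (by positivity)
      have h2 : 0 ≤ Tt⁻¹ * (T ℝ (j : ℤ)).eval u := by
        apply mul_nonneg (by positivity); linarith
      nlinarith
    -- assemble
    have hS1 := hsmall j hj1 hjJ
    set S1 := ∑ i ∈ Finset.Icc 1 (s-1), lam i * gam i ^ 2 with hS1d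
    set S2 := ∑ i ∈ Finset.Icc s m, lam i * gam i ^ 2 with hS2d
    set S := ∑ i ∈ Finset.Icc 1 m, lam i * gam i ^ 2 with hSd
    have hS1nn : 0 ≤ S1 := by
      apply Finset.sum_nonneg; intro i hi
      simp only [Finset.mem_Icc] at hi
      exact mul_nonneg (hpos i hi.1 (by omega)).le (sq_nonneg _)
    have hSsplit : S1 + S2 = S := hsum_split _
    have hsum1 : ∑ i ∈ Finset.Icc 1 (s-1), lam i * (gam i * q.eval (lam i)) ^ 2 ≤ S1 := by
      apply Finset.sum_le_sum
      intro i hi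
      simp only [Finset.mem_Icc] at hi
      have := hq1 i hi.1 hi.2
      have hli0 : (0:ℝ) ≤ lam i * gam i ^ 2 :=
        mul_nonneg (hpos i hi.1 (by omega)).le (sq_nonneg _)
      nlinarith
    have hsum2 : ∑ i ∈ Finset.Icc s m, lam i * (gam i * q.eval (lam i)) ^ 2
        ≤ 4 * Cc ^ (2 * j) * S2 := by
      rw [hS2d, Finset.mul_sum]
      apply Finset.sum_le_sum
      intro i hi
      simp only [Finset.mem_Icc] at hi
      have := hq2 i hi.1 hi.2
      have hli0 : (0:ℝ) ≤ lam i * gam i ^ 2 :=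
        mul_nonneg (hpos i (by omega) hi.2).le (sq_nonneg _)
      nlinarith
    have hvalsplit : (∑ i ∈ Finset.Icc 1 (s-1), lam i * (gam i * q.eval (lam i)) ^ 2)
        + ∑ i ∈ Finset.Icc s m, lam i * (gam i * q.eval (lam i)) ^ 2
        = ∑ i ∈ Finset.Icc 1 m, lam i * (gam i * q.eval (lam i)) ^ 2 := hsum_split _
    have hCc2j : 0 < Cc ^ (2 * j) := pow_pos hCc0 _
    calc sInf _ ≤ ∑ i ∈ Finset.Icc 1 m, lam i * (gam i * q.eval (lam i)) ^ 2 :=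
          key q hdq h0q
      _ ≤ 4 * Cc ^ (2 * j) * δ * S2 + 4 * Cc ^ (2 * j) * S2 := by
          rw [← hvalsplit]; gcongr <;> linarith
      _ = 4 * (1 + δ) * Cc ^ (2 * j) * S2 := by ring
      _ ≤ 4 * (1 + δ) * Cc ^ (2 * j) * S := by
          have : S2 ≤ S := by linarith
          have h4 : 0 < 4 * (1 + δ) * Cc ^ (2 * j) := by positivity
          nlinarith
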